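/- No free roundtrips: assume λ_{0−} ≤ λ_0 and 2β_t + γ̇_t > 0 for all t ∈ [0,T], and let the initial impact state be y = 0. Let (J_0, q, J_T) be a trading path satisfying the roundtrip constraint J_0 + ∫₀ᵀ q_t dt + J_T = 0. If the total execution cost (1/2)(y + Y_0)J_0 + ∫₀ᵀ Y_t q_t dt + (1/2)(Y_{T−} + Y_T)J_T + (1/2)∫₀ᵀ ε_t q_t² dt equals 0, then J_0 = 0, J_T = 0, and q_t = 0 for Lebesgue-almost every t. -/

import Mathlib

open Set MeasureTheory intervalIntegral

lemma ibp_primitive {T : ℝ} (hT : 0 ≤ T) {f g F G : ℝ → ℝ}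
    (hf : IntegrableOn f (Ioc 0 T)) (hg : IntegrableOn g (Ioc 0 T))
    (hF : ∀ t ∈ Icc (0:ℝ) T, F t = F 0 + ∫ s in (0:ℝ)..t, f s)
    (hG : ∀ t ∈ Icc (0:ℝ) T, G t = G 0 + ∫ s in (0:ℝ)..t, g s) :
    (∫ t in (0:ℝ)..T, (F t * g t + f t * G t)) = F T * G T - F 0 * G 0 := by
  set μ := volume.restrict (Ioc (0:ℝ) T) with hμ
  set Φ : ℝ → ℝ := fun x => ∫ s in Ioc (0:ℝ) x, f s with hΦdef
  set Ψ : ℝ → ℝ := fun x => ∫ s in Ioc (0:ℝ) x, g s with hΨdef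
  have hfIcc : IntegrableOn f (Icc 0 T) := (integrableOn_Icc_iff_integrableOn_Ioc).2 hf
  have hgIcc : IntegrableOn g (Icc 0 T) := (integrableOn_Icc_iff_integrableOn_Ioc).2 hg
  have hΦc : ContinuousOn Φ (Icc 0 T) := continuousOn_primitive hfIcc
  have hΨc : ContinuousOn Ψ (Icc 0 T) := continuousOn_primitive hgIcc
  -- boundedness of Φ, Ψ on Ioc
  have hΦbd : ∀ x ∈ Icc (0:ℝ) T, ‖Φ x‖ ≤ ∫ s in Ioc (0:ℝ) T, ‖f s‖ := by
    intro x hx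
    calc ‖Φ x‖ ≤ ∫ s in Ioc (0:ℝ) x, ‖f s‖ := norm_integral_le_integral_norm _
    _ ≤ ∫ s in Ioc (0:ℝ) T, ‖f s‖ := by
        apply setIntegral_mono_set hf.norm
        · filter_upwards with s using norm_nonneg _
        · exact HasSubset.Subset.eventuallyLE (Ioc_subset_Ioc le_rfl hx.2)
  have hΨbd : ∀ x ∈ Icc (0:ℝ) T, ‖Ψ x‖ ≤ ∫ s in Ioc (0:ℝ) T, ‖g s‖ := by
    intro x hx
    calc ‖Ψ x‖ ≤ ∫ s in Ioc (0:ℝ) x, ‖g s‖ := norm_integral_le_integral_norm _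
    _ ≤ ∫ s in Ioc (0:ℝ) T, ‖g s‖ := by
        apply setIntegral_mono_set hg.norm
        · filter_upwards with s using norm_nonneg _
        · exact HasSubset.Subset.eventuallyLE (Ioc_subset_Ioc le_rfl hx.2)
  have hΦm : AEStronglyMeasurable Φ μ :=
    (hΦc.mono Ioc_subset_Icc_self).aestronglyMeasurable measurableSet_Ioc
  have hΨm : AEStronglyMeasurable Ψ μ :=
    (hΨc.mono Ioc_subset_Icc_self).aestronglyMeasurable measurableSet_Ioc
  have haeΦ : ∀ᵐ x ∂μ, ‖Φ x‖ ≤ ∫ s in Ioc (0:ℝ) T, ‖f s‖ := by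
    rw [hμ, ae_restrict_iff' measurableSet_Ioc]
    filter_upwards with x hx using hΦbd x (Ioc_subset_Icc_self hx)
  have haeΨ : ∀ᵐ x ∂μ, ‖Ψ x‖ ≤ ∫ s in Ioc (0:ℝ) T, ‖g s‖ := by
    rw [hμ, ae_restrict_iff' measurableSet_Ioc]
    filter_upwards with x hx using hΨbd x (Ioc_subset_Icc_self hx)
  have hgΦ : Integrable (fun t => Φ t * g t) μ := hg.bdd_mul hΦm haeΦ
  have hfΨ : Integrable (fun t => Ψ t * f t) μ := hf.bdd_mul hΨm haeΨ
  -- Fubini part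
  have key : (∫ t, Φ t * g t ∂μ) + (∫ t, Ψ t * f t ∂μ)
      = (∫ s, f s ∂μ) * (∫ s, g s ∂μ) := by
    have hfi : Integrable f μ := hf
    have hgi : Integrable g μ := hg
    have hprod : Integrable (fun p : ℝ × ℝ => g p.1 * f p.2) (μ.prod μ) := hgi.mul_prod hfi
    set W : ℝ × ℝ → ℝ := fun p => if p.1 < p.2 then g p.1 * f p.2 else 0 with hW
    have hWm : AEStronglyMeasurable W (μ.prod μ) := by
      have hind : W = Set.indicator {p : ℝ × ℝ | p.1 < p.2} (fun p => g p.1 * f p.2) := by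
        ext p; simp [hW, Set.indicator_apply]
      rw [hind]
      exact hprod.1.indicator (measurableSet_lt measurable_fst measurable_snd)
    have hWint : Integrable W (μ.prod μ) := by
      refine Integrable.mono' hprod.norm hWm ?_
      filter_upwards with p
      by_cases h : p.1 < p.2 <;> simp [hW, h] <;> positivity
    set A := ∫ s, f s ∂μ with hA
    set B := ∫ s, g s ∂μ with hB
    have hsplit : ∀ t ∈ Ioc (0:ℝ) T, (∫ s in Ioc t T, f s) = A - Φ t := by
      intro t ht
      have hu : Ioc (0:ℝ) t ∪ Ioc t T = Ioc (0:ℝ) T := Ioc_union_Ioc_eq_Ioc ht.1.le ht.2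
      have hd : Disjoint (Ioc (0:ℝ) t) (Ioc t T) := Ioc_disjoint_Ioc_of_le le_rfl
      have hs2 := setIntegral_union hd measurableSet_Ioc
        (hf.mono_set (Ioc_subset_Ioc le_rfl ht.2)) (hf.mono_set (Ioc_subset_Ioc ht.1.le le_rfl))
      rw [hu] at hs2
      have : A = Φ t + ∫ s in Ioc t T, f s := hs2
      linarith
    have inner1 : ∀ t ∈ Ioc (0:ℝ) T, (∫ s, W (t, s) ∂μ) = g t * ∫ s in Ioc t T, f s := by
      intro t ht
      have hind : (fun s => W (t, s)) = Set.indicator (Ioi t) (fun s => g t * f s) := by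
        ext s; simp [hW, Set.indicator_apply]
      rw [hind, hμ, MeasureTheory.integral_indicator measurableSet_Ioi,
        Measure.restrict_restrict measurableSet_Ioi]
      have hset : Ioi t ∩ Ioc 0 T = Ioc t T := by
        ext s
        simp only [mem_inter_iff, mem_Ioi, mem_Ioc]
        exact ⟨fun ⟨h1, _, h3⟩ => ⟨h1, h3⟩, fun ⟨h1, h2⟩ => ⟨h1, ht.1.trans h1, h2⟩⟩
      rw [hset, MeasureTheory.integral_const_mul]
    have inner2 : ∀ s ∈ Ioc (0:ℝ) T, (∫ t, W (t, s) ∂μ) = Ψ s * f s := by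
      intro s hs
      have hind : (fun t => W (t, s)) = Set.indicator (Iio s) (fun t => g t * f s) := by
        ext t; simp [hW, Set.indicator_apply]
      rw [hind, hμ, MeasureTheory.integral_indicator measurableSet_Iio,
        Measure.restrict_restrict measurableSet_Iio]
      have hset : Iio s ∩ Ioc 0 T = Ioo 0 s := by
        ext t
        simp only [mem_inter_iff, mem_Iio, mem_Ioc, mem_Ioo]
        exact ⟨fun ⟨h1, h2, _⟩ => ⟨h2, h1⟩, fun ⟨h1, h2⟩ => ⟨h2, h1, (h2.le.trans hs.2)⟩⟩
      rw [hset, MeasureTheory.integral_mul_const, hΨdef]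
      dsimp only
      rw [integral_Ioc_eq_integral_Ioo]
    have swap : ∫ t, (∫ s, W (t, s) ∂μ) ∂μ = ∫ s, (∫ t, W (t, s) ∂μ) ∂μ :=
      integral_integral_swap hWint
    have lhs1 : ∫ t, (∫ s, W (t, s) ∂μ) ∂μ = ∫ t, g t * (∫ s in Ioc t T, f s) ∂μ := by
      rw [hμ]
      refine setIntegral_congr_fun measurableSet_Ioc fun t ht => ?_
      rw [← hμ, inner1 t ht]
    have lhs2 : ∫ t, g t * (∫ s in Ioc t T, f s) ∂μ = A * B - ∫ t, Φ t * g t ∂μ := by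
      have step : ∫ t, g t * (∫ s in Ioc t T, f s) ∂μ = ∫ t, (A * g t - Φ t * g t) ∂μ := by
        rw [hμ]
        refine setIntegral_congr_fun measurableSet_Ioc fun t ht => ?_
        rw [hsplit t ht]; ring
      rw [step, integral_sub (hgi.const_mul A) hgΦ, MeasureTheory.integral_const_mul, ← hB]
    have rhs1 : ∫ s, (∫ t, W (t, s) ∂μ) ∂μ = ∫ s, Ψ s * f s ∂μ := by
      rw [hμ]
      refine setIntegral_congr_fun measurableSet_Ioc fun s hs => ?_
      rw [← hμ, inner2 s hs]
    have : ∫ s, Ψ s * f s ∂μ = A * B - ∫ t, Φ t * g t ∂μ := by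
      rw [← rhs1, ← swap, lhs1, lhs2]
    linarith [this]
  -- assemble
  have h0T : ∀ x : ℝ, 0 ≤ x → (∫ s in (0:ℝ)..x, f s) = Φ x := fun x hx =>
    integral_of_le hx
  have h0Tg : ∀ x : ℝ, 0 ≤ x → (∫ s in (0:ℝ)..x, g s) = Ψ x := fun x hx =>
    integral_of_le hx
  have hFT : F T = F 0 + Φ T := by rw [hF T ⟨hT, le_rfl⟩, h0T T hT]
  have hGT : G T = G 0 + Ψ T := by rw [hG T ⟨hT, le_rfl⟩, h0Tg T hT]
  have hΦT : Φ T = ∫ s, f s ∂μ := rfl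
  have hΨT : Ψ T = ∫ s, g s ∂μ := rfl
  rw [integral_of_le hT]
  have : ∫ t in Ioc (0:ℝ) T, (F t * g t + f t * G t)
      = ∫ t, ((F 0 * g t + Φ t * g t) + (G 0 * f t + Ψ t * f t)) ∂μ := by
    apply setIntegral_congr_fun measurableSet_Ioc
    intro t ht
    have hFt : F t = F 0 + Φ t := by
      rw [hF t (Ioc_subset_Icc_self ht), h0T t ht.1.le]
    have hGt : G t = G 0 + Ψ t := by
      rw [hG t (Ioc_subset_Icc_self ht), h0Tg t ht.1.le]
    dsimp only; rw [hFt, hGt]; ring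
  rw [this]
  have h1 : Integrable (fun t => F 0 * g t + Φ t * g t) μ := (hg.const_mul (F 0)).add hgΦ
  have h2 : Integrable (fun t => G 0 * f t + Ψ t * f t) μ := (hf.const_mul (G 0)).add hfΨ
  rw [integral_add h1 h2, integral_add (hg.const_mul (F 0)) hgΦ,
    integral_add (hf.const_mul (G 0)) hfΨ, MeasureTheory.integral_const_mul, MeasureTheory.integral_const_mul,
    hFT, hGT, hΦT, hΨT]
  nlinarith [key]

lemma bootstrap (T : ℝ) (hT : 0 ≤ T) (beta g Y : ℝ → ℝ)
    (hbm : Measurable beta) (hgm : Measurable g) (M : ℝ) (hM : 0 < M)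
    (hbb : ∀ t ∈ Icc (0:ℝ) T, |beta t| ≤ M)
    (hgi : IntegrableOn g (Ioc 0 T))
    (hY : ∀ t ∈ Icc (0:ℝ) T, Y t = Y 0 + ∫ s in (0:ℝ)..t, (-beta s * Y s + g s)) :
    IntegrableOn (fun s => -beta s * Y s + g s) (Ioc 0 T) := by
  set f : ℝ → ℝ := fun s => -beta s * Y s + g s with hf
  set A : ℝ := |Y 0| + ∫ s in Ioc (0:ℝ) T, |g s| with hA
  have hgabs : (∫ s in Ioc (0:ℝ) T, |g s|) ≥ 0 :=
    setIntegral_nonneg measurableSet_Ioc fun s _ => abs_nonneg _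
  have hA0 : 0 ≤ A := by positivity
  have hgB_mono : ∀ x ∈ Icc (0:ℝ) T, gronwallBound 0 M A x ≤ gronwallBound 0 M A T := by
    intro x hx
    rw [gronwallBound_of_K_ne_0 hM.ne']
    dsimp only
    have h1 : Real.exp (M * x) ≤ Real.exp (M * T) := by
      apply Real.exp_le_exp.2
      exact mul_le_mul_of_nonneg_left hx.2 hM.le
    have h2 : 0 ≤ A / M := by positivity
    nlinarith
  set K : ℝ := A + M * gronwallBound 0 M A T with hK
  -- uniform bound on |Y| on any good interval
  have hbd : ∀ t₁ ∈ Icc (0:ℝ) T, IntegrableOn f (Ioc 0 t₁) →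
      ∀ s ∈ Icc (0:ℝ) t₁, |Y s| ≤ K := by
    intro t₁ ht₁ hfint
    have hf1 : IntegrableOn f (Icc 0 t₁) := (integrableOn_Icc_iff_integrableOn_Ioc).2 hfint
    have hYrep : ∀ s ∈ Icc (0:ℝ) t₁, Y s = Y 0 + ∫ u in Ioc (0:ℝ) s, f u := by
      intro s hs
      rw [hY s ⟨hs.1, hs.2.trans ht₁.2⟩, intervalIntegral.integral_of_le hs.1]
    have hYc : ContinuousOn Y (Icc 0 t₁) := by
      refine ContinuousOn.congr (continuousOn_const.add (continuousOn_primitive hf1)) hYrep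
    have habs : ContinuousOn (fun s => |Y s|) (Icc 0 t₁) := continuous_abs.comp_continuousOn hYc
    have hai : IntegrableOn (fun s => |Y s|) (Icc 0 t₁) := habs.integrableOn_Icc
    set v : ℝ → ℝ := fun x => ∫ u in (0:ℝ)..x, |Y u| with hv
    have hvc : ContinuousOn v (Icc 0 t₁) := by
      have := continuousOn_primitive_interval
        (f := fun u => |Y u|) (a := (0:ℝ)) (b := t₁) (μ := volume)
        (by rwa [uIcc_of_le ht₁.1])
      rwa [uIcc_of_le ht₁.1] at this
    have hvnonneg : ∀ x ∈ Icc (0:ℝ) t₁, 0 ≤ v x := fun x hx =>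
      intervalIntegral.integral_nonneg hx.1 fun u _ => abs_nonneg _
    have hvd : ∀ x ∈ Ico (0:ℝ) t₁, HasDerivWithinAt v (|Y x|) (Ici x) x := by
      intro x hx
      have hii : IntervalIntegrable (fun u => |Y u|) volume 0 x := by
        rw [intervalIntegrable_iff_integrableOn_Icc_of_le hx.1]
        exact hai.mono_set (Icc_subset_Icc le_rfl hx.2.le)
      have hmemIci : Icc 0 t₁ ∈ nhdsWithin x (Ici x) := by
        refine mem_nhdsWithin.2 ⟨Iio t₁, isOpen_Iio, hx.2, ?_⟩
        rintro a ⟨ha1, ha2⟩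
        exact ⟨hx.1.trans ha2, le_of_lt ha1⟩
      have hmemIoi : Icc 0 t₁ ∈ nhdsWithin x (Ioi x) :=
        nhdsWithin_mono x Ioi_subset_Ici_self hmemIci
      have hmeas : StronglyMeasurableAtFilter (fun u => |Y u|) (nhdsWithin x (Ioi x)) volume :=
        ⟨Icc 0 t₁, hmemIoi, habs.aestronglyMeasurable measurableSet_Icc⟩
      have hcw : ContinuousWithinAt (fun u => |Y u|) (Ioi x) x := by
        have h := (habs x ⟨hx.1, hx.2.le⟩).mono (Icc_subset_Icc hx.1 le_rfl :
          Icc x t₁ ⊆ Icc 0 t₁)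
        have h2 : ContinuousWithinAt (fun u => |Y u|) (Ici x) x := by
          rwa [ContinuousWithinAt, nhdsWithin_Icc_eq_nhdsGE hx.2] at h
        exact h2.mono Ioi_subset_Ici_self
      exact intervalIntegral.integral_hasDerivWithinAt_right hii hmeas hcw
    have hbound : ∀ x ∈ Icc (0:ℝ) t₁, |Y x| ≤ A + M * v x := by
      intro x hx
      have h1 : |Y x| ≤ |Y 0| + |∫ u in (0:ℝ)..x, f u| := by
        rw [hY x ⟨hx.1, hx.2.trans ht₁.2⟩]
        exact abs_add_le _ _
      have hfii : IntervalIntegrable f volume 0 x := by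
        rw [intervalIntegrable_iff_integrableOn_Icc_of_le hx.1]
        exact hf1.mono_set (Icc_subset_Icc le_rfl hx.2)
      have h2 : |∫ u in (0:ℝ)..x, f u| ≤ ∫ u in (0:ℝ)..x, |f u| :=
        intervalIntegral.abs_integral_le_integral_abs hx.1
      have hgx : IntegrableOn (fun u => |g u|) (Icc 0 x) := by
        apply IntegrableOn.mono_set ((integrableOn_Icc_iff_integrableOn_Ioc).2 hgi.abs)
        exact Icc_subset_Icc le_rfl (hx.2.trans ht₁.2)
      have hgx' : IntervalIntegrable (fun u => |g u|) volume 0 x := by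
        rw [intervalIntegrable_iff_integrableOn_Icc_of_le hx.1]; exact hgx
      have haix : IntervalIntegrable (fun u => |Y u|) volume 0 x := by
        rw [intervalIntegrable_iff_integrableOn_Icc_of_le hx.1]
        exact hai.mono_set (Icc_subset_Icc le_rfl hx.2)
      have hgood : IntervalIntegrable (fun u => M * |Y u| + |g u|) volume 0 x :=
        (haix.const_mul M).add hgx'
      have h3 : (∫ u in (0:ℝ)..x, |f u|) ≤ ∫ u in (0:ℝ)..x, (M * |Y u| + |g u|) := by
        apply intervalIntegral.integral_mono_on hx.1 hfii.abs hgood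
        intro u hu
        have hu' : u ∈ Icc (0:ℝ) T := ⟨hu.1, hu.2.trans (hx.2.trans ht₁.2)⟩
        calc |f u| = |(-beta u * Y u) + g u| := rfl
        _ ≤ |(-beta u) * Y u| + |g u| := abs_add_le _ _
        _ ≤ M * |Y u| + |g u| := by
            rw [abs_mul, abs_neg]
            gcongr
            exact hbb u hu'
      have h4 : (∫ u in (0:ℝ)..x, (M * |Y u| + |g u|))
          = M * v x + ∫ u in (0:ℝ)..x, |g u| := by
        rw [intervalIntegral.integral_add (haix.const_mul M) hgx',
          intervalIntegral.integral_const_mul]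
      have h5 : (∫ u in (0:ℝ)..x, |g u|) ≤ ∫ s in Ioc (0:ℝ) T, |g s| := by
        rw [intervalIntegral.integral_of_le hx.1]
        apply setIntegral_mono_set hgi.abs
        · filter_upwards with s using abs_nonneg _
        · exact HasSubset.Subset.eventuallyLE (Ioc_subset_Ioc le_rfl (hx.2.trans ht₁.2))
      have : |f| = (fun u => |f u|) := rfl
      calc |Y x| ≤ |Y 0| + |∫ u in (0:ℝ)..x, f u| := h1
      _ ≤ |Y 0| + ∫ u in (0:ℝ)..x, |f u| := by linarith
      _ ≤ |Y 0| + (M * v x + ∫ u in (0:ℝ)..x, |g u|) := by linarith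
      _ ≤ A + M * v x := by rw [hA]; linarith
    -- Gronwall
    have hv0 : ‖v 0‖ ≤ 0 := by simp [hv]
    have hgr := norm_le_gronwallBound_of_norm_deriv_right_le (f := v)
      (f' := fun x => |Y x|) (δ := 0) (K := M) (ε := A) (a := 0) (b := t₁)
      hvc hvd hv0 ?_
    · intro s hs
      have hgrs := hgr s hs
      rw [Real.norm_eq_abs, abs_of_nonneg (hvnonneg s hs), sub_zero] at hgrs
      have h6 := hgB_mono s ⟨hs.1, hs.2.trans ht₁.2⟩
      have h7 := hbound s hs
      rw [hK]
      nlinarith [hM.le]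
    · intro x hx
      rw [Real.norm_eq_abs, abs_abs, Real.norm_eq_abs,
        abs_of_nonneg (hvnonneg x ⟨hx.1, hx.2.le⟩)]
      linarith [hbound x ⟨hx.1, hx.2.le⟩]
  -- main part
  have h0S : (0:ℝ) ∈ Icc (0:ℝ) T ∧ IntegrableOn f (Ioc 0 (0:ℝ)) := by
    constructor
    · exact ⟨le_rfl, hT⟩
    · rw [Ioc_self]; exact integrableOn_empty
  set S : Set ℝ := {t : ℝ | t ∈ Icc (0:ℝ) T ∧ IntegrableOn f (Ioc 0 t)} with hS
  have h0S' : (0:ℝ) ∈ S := h0S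
  have hSne : S.Nonempty := ⟨0, h0S'⟩
  have hSb : BddAbove S := ⟨T, fun t ht => ht.1.2⟩
  set c : ℝ := sSup S with hc
  have hc0 : 0 ≤ c := le_csSup hSb h0S'
  have hcT : c ≤ T := csSup_le hSne fun t ht => ht.1.2
  have hYK : ∀ s : ℝ, 0 ≤ s → s < c → |Y s| ≤ K := by
    intro s hs0 hsc
    obtain ⟨t, htS, hst⟩ := exists_lt_of_lt_csSup hSne hsc
    exact hbd t htS.1 htS.2 s ⟨hs0, hst.le⟩
  have hcS : c ∈ S := by
    refine ⟨⟨hc0, hcT⟩, ?_⟩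
    rcases eq_or_lt_of_le hc0 with hc0' | hcpos
    · rw [← hc0', Ioc_self]; exact integrableOn_empty
    have hioo : IntegrableOn f (Ioo 0 c) := by
      have hmeas : AEStronglyMeasurable f (volume.restrict (Ioo 0 c)) := by
        set u : ℕ → ℝ := fun n => c - c / (n + 1) with hu
        have huc : ∀ n : ℕ, 0 ≤ u n ∧ u n < c := by
          intro n
          have h1 : 0 < c / (n + 1) := by positivity
          have h2 : c / (n + 1) ≤ c := by
            rw [div_le_iff₀ (by positivity)]
            nlinarith [Nat.cast_nonneg (α := ℝ) n]
          exact ⟨by simp [hu]; linarith, by simp [hu]; linarith⟩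
        have hun : (⋃ n : ℕ, Ioc (0:ℝ) (u n)) = Ioo 0 c := by
          apply Subset.antisymm
          · intro x hx
            simp only [mem_iUnion, mem_Ioc] at hx
            obtain ⟨n, hn1, hn2⟩ := hx
            exact ⟨hn1, lt_of_le_of_lt hn2 (huc n).2⟩
          · intro x hx
            simp only [mem_iUnion, mem_Ioc]
            obtain ⟨n, hn⟩ := exists_nat_gt (c / (c - x))
            refine ⟨n, hx.1, ?_⟩
            have hcx : 0 < c - x := by linarith [hx.2]
            have hlt : c / (c - x) < (n:ℝ) + 1 := by linarith
            have h2 : c / ((n:ℝ) + 1) < c - x := by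
              rw [div_lt_iff₀ (by positivity)]
              rw [div_lt_iff₀ hcx] at hlt
              nlinarith
            simp only [hu]
            linarith
        rw [← hun, aestronglyMeasurable_iUnion_iff]
        intro n
        obtain ⟨t, htS, hst⟩ := exists_lt_of_lt_csSup hSne (huc n).2
        exact (htS.2.mono_set (Ioc_subset_Ioc le_rfl hst.le)).1
      apply Integrable.mono' (g := fun s => M * K + |g s|) ?_ hmeas ?_
      · exact (integrable_const _).add
          ((hgi.mono_set (Ioo_subset_Ioc_self.trans (Ioc_subset_Ioc le_rfl hcT))).abs)
      · rw [ae_restrict_iff' measurableSet_Ioo]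
        filter_upwards with s hs
        have hYs := hYK s hs.1.le hs.2
        have hbs : |beta s| ≤ M := hbb s ⟨hs.1.le, (hs.2.trans_le hcT).le⟩
        calc ‖f s‖ = |(-beta s * Y s) + g s| := rfl
        _ ≤ |(-beta s) * Y s| + |g s| := abs_add_le _ _
        _ ≤ M * K + |g s| := by
            rw [abs_mul, abs_neg]
            have := mul_le_mul hbs hYs (abs_nonneg _) hM.le
            linarith
    exact (integrableOn_Ioc_iff_integrableOn_Ioo).2 hioo
  have hcTeq : c = T := by
    by_contra hne
    have hclt : c < T := lt_of_le_of_ne hcT hne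
    have hconst : ∀ s, s ∈ Ioc c T → Y s = Y 0 := by
      intro s hs
      have hsnotS : s ∉ S := fun hmem => absurd (le_csSup hSb hmem) (not_le.2 hs.1)
      have hnint : ¬ IntegrableOn f (Ioc 0 s) := fun h =>
        hsnotS ⟨⟨hc0.trans hs.1.le, hs.2⟩, h⟩
      have h := hY s ⟨hc0.trans hs.1.le, hs.2⟩
      rwa [intervalIntegral.integral_of_le (hc0.trans hs.1.le), integral_undef hnint,
        add_zero] at h
    have htail : IntegrableOn f (Ioc c T) := by
      have haux : IntegrableOn (fun s => -beta s * Y 0 + g s) (Ioc c T) := by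
        apply Integrable.mono' (g := fun s => M * |Y 0| + |g s|)
        · exact (integrable_const _).add ((hgi.mono_set (Ioc_subset_Ioc hc0 le_rfl)).abs)
        · exact ((hbm.neg.mul_const _).add hgm).aestronglyMeasurable.restrict
        · rw [ae_restrict_iff' measurableSet_Ioc]
          filter_upwards with s hs
          have hbs : |beta s| ≤ M := hbb s ⟨hc0.trans hs.1.le, hs.2⟩
          calc ‖-beta s * Y 0 + g s‖ ≤ |(-beta s) * Y 0| + |g s| := abs_add_le _ _
          _ ≤ M * |Y 0| + |g s| := by
              rw [abs_mul, abs_neg]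
              have := mul_le_mul_of_nonneg_right hbs (abs_nonneg (Y 0))
              linarith
      exact haux.congr_fun
        (fun s hs => by simp only [hf]; rw [hconst s hs]) measurableSet_Ioc
    have hTS : T ∈ S := by
      refine ⟨⟨hT, le_rfl⟩, ?_⟩
      rw [← Ioc_union_Ioc_eq_Ioc hc0 hcT]
      exact hcS.2.union htail
    exact absurd (le_csSup hSb hTS) (not_le.2 hclt)
  exact hcTeq ▸ hcS.2


set_option maxHeartbeats 1000000 in
/-- **No free roundtrips.** Assume `λ_{0−} ≤ λ_0`, `2β_t + γ̇_t > 0` on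
`[0,T]`, and initial impact state `y = 0`. If a trading path satisfies the roundtrip
constraint `J_0 + ∫₀ᵀ q_t dt + J_T = 0` and its total execution cost vanishes, then
`J_0 = 0`, `J_T = 0`, and `q_t = 0` for Lebesgue-a.e. `t ∈ [0,T]`. -/
theorem no_free_roundtrips
    (T : ℝ) (hT : 0 < T) (lam0m y : ℝ) (hlam0m : 0 < lam0m)
    (beta lam lam' eps : ℝ → ℝ)
    (hbeta_meas : Measurable beta) (heps_meas : Measurable eps)
    (hbeta_pos : ∀ t ∈ Icc (0:ℝ) T, 0 < beta t)
    (hbeta_bdd : ∃ M, ∀ t ∈ Icc (0:ℝ) T, |beta t| ≤ M)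
    (heps_lb : ∃ c, 0 < c ∧ ∀ t ∈ Icc (0:ℝ) T, c ≤ eps t)
    (heps_ub : ∃ M, ∀ t ∈ Icc (0:ℝ) T, eps t ≤ M)
    (hlam_lb : ∃ c, 0 < c ∧ ∀ t ∈ Icc (0:ℝ) T, c ≤ lam t)
    (hlam_ub : ∃ M, ∀ t ∈ Icc (0:ℝ) T, lam t ≤ M)
    (hlam_deriv : ∀ t, HasDerivAt lam (lam' t) t)
    (hlam'_bdd : ∃ M, ∀ t, |lam' t| ≤ M)
    (J0 JT : ℝ) (q : ℝ → ℝ) (hq_meas : Measurable q)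
    (hq_sq : IntegrableOn (fun t => q t ^ 2) (Icc (0:ℝ) T))
    (Y : ℝ → ℝ) (hY0 : Y 0 = y + lam0m * J0)
    (hY : ∀ t ∈ Icc (0:ℝ) T,
        Y t = Y 0 + ∫ s in (0:ℝ)..t, (-beta s * Y s + lam s * q s))
    (hle : lam0m ≤ lam 0)
    (hnoarb : ∀ t ∈ Icc (0:ℝ) T, 0 < 2 * beta t + lam' t / lam t)
    (hy : y = 0)
    (hconstraint : J0 + (∫ t in (0:ℝ)..T, q t) + JT = 0)
    (hcost : (1/2) * (y + Y 0) * J0 + (∫ t in (0:ℝ)..T, Y t * q t)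
      + (1/2) * (Y T + (Y T + lam T * JT)) * JT
      + (1/2) * (∫ t in (0:ℝ)..T, eps t * q t ^ 2) = 0) :
    J0 = 0 ∧ JT = 0 ∧ ∀ᵐ t ∂(volume.restrict (Icc (0:ℝ) T)), q t = 0 := by
  subst hy
  obtain ⟨Mb, hMb⟩ := hbeta_bdd
  obtain ⟨ceps, hceps, heps_lb⟩ := heps_lb
  obtain ⟨Meps, hMeps⟩ := heps_ub
  obtain ⟨cl, hcl, hll⟩ := hlam_lb
  obtain ⟨Ml, hMl⟩ := hlam_ub
  obtain ⟨Ml', hMl'⟩ := hlam'_bdd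
  have hMl'0 : 0 ≤ Ml' := le_trans (abs_nonneg _) (hMl' 0)
  have hlam_cont : Continuous lam :=
    continuous_iff_continuousAt.2 fun t => (hlam_deriv t).continuousAt
  have hlam_meas : Measurable lam := hlam_cont.measurable
  have hlam'_meas : Measurable lam' := by
    have he : lam' = deriv lam := funext fun t => ((hlam_deriv t).deriv).symm
    rw [he]; exact measurable_deriv _
  have hlpos : ∀ t ∈ Icc (0:ℝ) T, 0 < lam t := fun t ht => hcl.trans_le (hll t ht)
  have hl0 : 0 < lam 0 := hlpos 0 ⟨le_rfl, hT.le⟩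
  have hlT : 0 < lam T := hlpos T ⟨hT.le, le_rfl⟩
  set M : ℝ := max Mb 1 with hM
  have hMpos : (0:ℝ) < M := lt_of_lt_of_le one_pos (le_max_right _ _)
  have hbbM : ∀ t ∈ Icc (0:ℝ) T, |beta t| ≤ M := fun t ht =>
    (hMb t ht).trans (le_max_left _ _)
  -- q is integrable
  have hq1 : IntegrableOn q (Icc 0 T) := by
    apply Integrable.mono' (g := fun t => 1 + q t ^ 2)
    · exact (integrable_const 1).add hq_sq
    · exact hq_meas.aestronglyMeasurable.restrict
    · filter_upwards with t
      rw [Real.norm_eq_abs]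
      nlinarith [sq_nonneg (|q t| - 1), sq_abs (q t)]
  have hq1' : IntegrableOn q (Ioc 0 T) := hq1.mono_set Ioc_subset_Icc_self
  have hg : IntegrableOn (fun s => lam s * q s) (Ioc 0 T) := by
    apply Integrable.mono' (g := fun t => Ml * |q t|)
    · exact hq1'.abs.const_mul Ml
    · exact (hlam_meas.mul hq_meas).aestronglyMeasurable.restrict
    · rw [ae_restrict_iff' measurableSet_Ioc]
      filter_upwards with t ht
      have ht' : t ∈ Icc (0:ℝ) T := Ioc_subset_Icc_self ht
      rw [Real.norm_eq_abs, abs_mul, abs_of_pos (hlpos t ht')]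
      exact mul_le_mul_of_nonneg_right (hMl t ht') (abs_nonneg _)
  -- integrability of the ODE integrand
  have hfint : IntegrableOn (fun s => -beta s * Y s + lam s * q s) (Ioc 0 T) :=
    bootstrap T hT.le beta (fun s => lam s * q s) Y hbeta_meas (hlam_meas.mul hq_meas)
      M hMpos hbbM hg hY
  set f : ℝ → ℝ := fun s => -beta s * Y s + lam s * q s with hfdef
  have hfIcc : IntegrableOn f (Icc 0 T) := (integrableOn_Icc_iff_integrableOn_Ioc).2 hfint
  -- continuity and boundedness of Y
  have hYrep : ∀ s ∈ Icc (0:ℝ) T, Y s = Y 0 + ∫ u in Ioc (0:ℝ) s, f u := by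
    intro s hs
    rw [hY s hs, intervalIntegral.integral_of_le hs.1]
  have hYc : ContinuousOn Y (Icc 0 T) :=
    ContinuousOn.congr (continuousOn_const.add (continuousOn_primitive hfIcc)) hYrep
  obtain ⟨K, hKb⟩ := (isCompact_Icc (a := (0:ℝ)) (b := T)).exists_bound_of_continuousOn hYc
  have hYmeas : AEStronglyMeasurable Y (volume.restrict (Ioc 0 T)) :=
    (hYc.mono Ioc_subset_Icc_self).aestronglyMeasurable measurableSet_Ioc
  have hYbd : ∀ᵐ t ∂(volume.restrict (Ioc 0 T)), ‖Y t‖ ≤ K := by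
    rw [ae_restrict_iff' measurableSet_Ioc]
    filter_upwards with t ht using hKb t (Ioc_subset_Icc_self ht)
  -- Y^2 is a primitive
  have hYsq : ∀ t ∈ Icc (0:ℝ) T, Y t ^ 2 = Y 0 ^ 2 + ∫ s in (0:ℝ)..t, 2 * Y s * f s := by
    intro t ht
    have h := ibp_primitive ht.1 (hfint.mono_set (Ioc_subset_Ioc le_rfl ht.2))
      (hfint.mono_set (Ioc_subset_Ioc le_rfl ht.2))
      (fun u hu => hY u ⟨hu.1, hu.2.trans ht.2⟩) (fun u hu => hY u ⟨hu.1, hu.2.trans ht.2⟩)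
    have h2 : (∫ s in (0:ℝ)..t, 2 * Y s * f s) = ∫ s in (0:ℝ)..t, (Y s * f s + f s * Y s) :=
      intervalIntegral.integral_congr fun s _ => by ring
    rw [h2, h]; ring
  have hu_int : IntegrableOn (fun s => 2 * Y s * f s) (Ioc 0 T) := by
    have : IntegrableOn (fun s => (2 * Y s) * f s) (Ioc 0 T) := by
      apply Integrable.bdd_mul (c := 2 * K) hfint
        ((hYmeas.const_mul 2) : AEStronglyMeasurable (fun s => 2 * Y s) _)
      filter_upwards [hYbd] with t htb
      rw [Real.norm_eq_abs, abs_mul]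
      calc |(2:ℝ)| * |Y t| = 2 * |Y t| := by rw [abs_two]
      _ ≤ 2 * K := by
          have : |Y t| ≤ K := by rwa [Real.norm_eq_abs] at htb
          linarith
    exact this.congr_fun (fun s _ => by ring) measurableSet_Ioc
  -- 1/lam is a primitive
  set w : ℝ → ℝ := fun s => -lam' s / lam s ^ 2 with hwdef
  have hw_int : IntegrableOn w (Ioc 0 T) := by
    apply Integrable.mono' (g := fun _ => Ml' / cl ^ 2)
    · exact integrable_const _
    · exact ((hlam'_meas.neg).div (hlam_meas.pow_const 2)).aestronglyMeasurable.restrict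
    · rw [ae_restrict_iff' measurableSet_Ioc]
      filter_upwards with t ht
      have ht' : t ∈ Icc (0:ℝ) T := Ioc_subset_Icc_self ht
      have hl := hll t ht'
      have hlp := hlpos t ht'
      rw [Real.norm_eq_abs, hwdef]
      dsimp only
      rw [abs_div, abs_neg, abs_pow, abs_of_pos hlp]
      exact div_le_div₀ hMl'0 (hMl' t) (by positivity) (by nlinarith)
  have hinv : ∀ t ∈ Icc (0:ℝ) T, (lam t)⁻¹ = (lam 0)⁻¹ + ∫ s in (0:ℝ)..t, w s := by
    intro t ht
    have hderiv : ∀ x ∈ uIcc (0:ℝ) t, HasDerivAt (fun u => (lam u)⁻¹) (w x) x := by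
      intro x hx
      rw [uIcc_of_le ht.1] at hx
      exact (hlam_deriv x).inv (ne_of_gt (hlpos x ⟨hx.1, hx.2.trans ht.2⟩))
    have hint : IntervalIntegrable w volume 0 t := by
      rw [intervalIntegrable_iff_integrableOn_Ioc_of_le ht.1]
      exact hw_int.mono_set (Ioc_subset_Ioc le_rfl ht.2)
    have := intervalIntegral.integral_eq_sub_of_hasDerivAt hderiv hint
    rw [this]; ring
  -- the second IBP
  have hibp2 := ibp_primitive hT.le hu_int hw_int hYsq hinv
  set P : ℝ → ℝ := fun t => lam' t / lam t ^ 2 + 2 * beta t / lam t with hPdef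
  have hPbd : ∀ t ∈ Icc (0:ℝ) T, |P t| ≤ Ml' / cl ^ 2 + 2 * Mb / cl := by
    intro t ht
    have hl := hll t ht
    have hlp := hlpos t ht
    have h1 : |lam' t / lam t ^ 2| ≤ Ml' / cl ^ 2 := by
      rw [abs_div, abs_pow, abs_of_pos hlp]
      exact div_le_div₀ hMl'0 (hMl' t) (by positivity) (by nlinarith)
    have h2 : |2 * beta t / lam t| ≤ 2 * Mb / cl := by
      rw [abs_div, abs_mul, abs_two, abs_of_pos hlp]
      apply div_le_div₀ _ _ hcl hl
      · have := hMb t ht; have := abs_nonneg (beta t); linarith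
      · have := hMb t ht; linarith
    calc |P t| ≤ |lam' t / lam t ^ 2| + |2 * beta t / lam t| := abs_add_le _ _
    _ ≤ Ml' / cl ^ 2 + 2 * Mb / cl := by linarith
  have hPpos : ∀ t ∈ Icc (0:ℝ) T, 0 < P t := by
    intro t ht
    have hlp := hlpos t ht
    have hP : P t = (2 * beta t + lam' t / lam t) / lam t := by
      rw [hPdef]; dsimp only; field_simp; ring
    rw [hP]
    exact div_pos (hnoarb t ht) hlp
  have hPmeas : Measurable P :=
    (hlam'_meas.div (hlam_meas.pow_const 2)).add
      ((measurable_const.mul hbeta_meas).div hlam_meas)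
  have hYP_int : IntegrableOn (fun t => Y t ^ 2 * P t) (Ioc 0 T) := by
    apply Integrable.mono' (g := fun _ => K ^ 2 * (Ml' / cl ^ 2 + 2 * Mb / cl))
    · exact integrable_const _
    · exact (((hYmeas.mul hYmeas).congr (by filter_upwards with t using (sq (Y t)).symm ▸ rfl)
        : AEStronglyMeasurable (fun t => Y t ^ 2) _).mul
        hPmeas.aestronglyMeasurable.restrict)
    · rw [ae_restrict_iff' measurableSet_Ioc]
      filter_upwards with t ht
      have ht' : t ∈ Icc (0:ℝ) T := Ioc_subset_Icc_self ht
      have h1 : |Y t| ≤ K := by have := hKb t ht'; rwa [Real.norm_eq_abs] at this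
      have h2 := hPbd t ht'
      rw [Real.norm_eq_abs, abs_mul, abs_pow]
      have hK0 : 0 ≤ K := le_trans (abs_nonneg _) h1
      have h3 : |Y t| ^ 2 ≤ K ^ 2 := by nlinarith [abs_nonneg (Y t)]
      exact mul_le_mul h3 h2 (abs_nonneg _) (by positivity)
  have hYq_int : IntegrableOn (fun t => Y t * q t) (Ioc 0 T) :=
    Integrable.bdd_mul (c := K) hq1' hYmeas hYbd
  have hεq_int : IntegrableOn (fun t => eps t * q t ^ 2) (Ioc 0 T) := by
    apply Integrable.mono' (g := fun t => Meps * q t ^ 2)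
    · exact (hq_sq.mono_set Ioc_subset_Icc_self).const_mul Meps
    · exact (heps_meas.mul (hq_meas.pow_const 2)).aestronglyMeasurable.restrict
    · rw [ae_restrict_iff' measurableSet_Ioc]
      filter_upwards with t ht
      have ht' : t ∈ Icc (0:ℝ) T := Ioc_subset_Icc_self ht
      have h1 : 0 < eps t := hceps.trans_le (heps_lb t ht')
      rw [Real.norm_eq_abs, abs_mul, abs_of_pos h1, abs_pow, sq_abs]
      exact mul_le_mul_of_nonneg_right (hMeps t ht') (sq_nonneg _)
  -- rewrite the IBP identity
  have huIcc : uIcc (0:ℝ) T = Icc 0 T := uIcc_of_le hT.le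
  have h3 : (∫ t in (0:ℝ)..T, (-(Y t ^ 2 * P t) + 2 * (Y t * q t)))
      = Y T ^ 2 * (lam T)⁻¹ - Y 0 ^ 2 * (lam 0)⁻¹ := by
    rw [← hibp2]
    apply intervalIntegral.integral_congr
    rw [huIcc]
    intro t ht
    have hlp := hlpos t ht
    have hne : lam t ≠ 0 := ne_of_gt hlp
    dsimp only
    simp only [hwdef, hfdef, hPdef]
    field_simp
    ring
  have hYPii : IntervalIntegrable (fun t => Y t ^ 2 * P t) volume 0 T := by
    rw [intervalIntegrable_iff_integrableOn_Ioc_of_le hT.le]; exact hYP_int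
  have hYqii : IntervalIntegrable (fun t => Y t * q t) volume 0 T := by
    rw [intervalIntegrable_iff_integrableOn_Ioc_of_le hT.le]; exact hYq_int
  have hYPneg : IntervalIntegrable (fun t => -(Y t ^ 2 * P t)) volume 0 T := hYPii.neg
  have hYq2 : IntervalIntegrable (fun t => 2 * (Y t * q t)) volume 0 T := hYqii.const_mul 2
  rw [intervalIntegral.integral_add hYPneg hYq2,
    intervalIntegral.integral_neg, intervalIntegral.integral_const_mul] at h3
  set IwP : ℝ := ∫ t in (0:ℝ)..T, Y t ^ 2 * P t with hIwP
  set IYq : ℝ := ∫ t in (0:ℝ)..T, Y t * q t with hIYq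
  set Ieps : ℝ := ∫ t in (0:ℝ)..T, eps t * q t ^ 2 with hIeps
  have hIwP_nonneg : 0 ≤ IwP :=
    intervalIntegral.integral_nonneg hT.le fun u hu =>
      mul_nonneg (sq_nonneg _) (hPpos u hu).le
  have hIeps_nonneg : 0 ≤ Ieps :=
    intervalIntegral.integral_nonneg hT.le fun u hu => by
      have h1 : 0 < eps u := hceps.trans_le (heps_lb u hu)
      positivity
  -- cost decomposition
  have e1 : (1/2) * (0 + Y 0) * J0 = Y 0 ^ 2 * (lam0m)⁻¹ / 2 := by
    rw [hY0, zero_add]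
    field_simp
    ring
  have e2 : (1/2) * (Y T + (Y T + lam T * JT)) * JT
      = (Y T + lam T * JT) ^ 2 * (lam T)⁻¹ / 2 - Y T ^ 2 * (lam T)⁻¹ / 2 := by
    field_simp
    ring
  have hsum : Y 0 ^ 2 * (lam0m)⁻¹ - Y 0 ^ 2 * (lam 0)⁻¹
      + (Y T + lam T * JT) ^ 2 * (lam T)⁻¹ + IwP + Ieps = 0 := by
    rw [e1, e2] at hcost
    linarith [h3, hcost]
  have n1 : 0 ≤ Y 0 ^ 2 * (lam0m)⁻¹ - Y 0 ^ 2 * (lam 0)⁻¹ := by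
    have hinvle : (lam 0)⁻¹ ≤ (lam0m)⁻¹ := by
      apply inv_anti₀ hlam0m hle
    nlinarith [sq_nonneg (Y 0)]
  have n2 : 0 ≤ (Y T + lam T * JT) ^ 2 * (lam T)⁻¹ :=
    mul_nonneg (sq_nonneg _) (inv_nonneg.2 hlT.le)
  have hIwP0 : IwP = 0 := by linarith
  have hIeps0 : Ieps = 0 := by linarith
  -- a.e. conclusions
  have hq0 : ∀ᵐ t ∂(volume.restrict (Ioc (0:ℝ) T)), q t = 0 := by
    have h0 : (∫ t in Ioc (0:ℝ) T, eps t * q t ^ 2) = 0 := by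
      rw [← intervalIntegral.integral_of_le hT.le]; exact hIeps0
    have hae : (fun t => eps t * q t ^ 2) =ᵐ[volume.restrict (Ioc (0:ℝ) T)] 0 := by
      rw [← setIntegral_eq_zero_iff_of_nonneg_ae _ hεq_int]
      · exact h0
      · refine (ae_restrict_iff' measurableSet_Ioc).2 (Filter.Eventually.of_forall fun t ht => ?_)
        simp only [Pi.zero_apply]
        have h1 : 0 < eps t := hceps.trans_le (heps_lb t (Ioc_subset_Icc_self ht))
        positivity
    have hae2 : ∀ᵐ t ∂(volume.restrict (Ioc (0:ℝ) T)), eps t * q t ^ 2 = 0 := by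
      filter_upwards [hae] with t h using h
    rw [ae_restrict_iff' measurableSet_Ioc] at hae2 ⊢
    filter_upwards [hae2] with t h1 ht
    have h2 := h1 ht
    have h3 : 0 < eps t := hceps.trans_le (heps_lb t (Ioc_subset_Icc_self ht))
    have : q t ^ 2 = 0 := by
      rcases mul_eq_zero.1 h2 with h | h
      · exact absurd h (ne_of_gt h3)
      · exact h
    exact pow_eq_zero_iff (two_ne_zero) |>.1 this
  have hYae : ∀ᵐ t ∂(volume.restrict (Ioc (0:ℝ) T)), Y t = 0 := by
    have h0 : (∫ t in Ioc (0:ℝ) T, Y t ^ 2 * P t) = 0 := by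
      rw [← intervalIntegral.integral_of_le hT.le]; exact hIwP0
    have hae : (fun t => Y t ^ 2 * P t) =ᵐ[volume.restrict (Ioc (0:ℝ) T)] 0 := by
      rw [← setIntegral_eq_zero_iff_of_nonneg_ae _ hYP_int]
      · exact h0
      · refine (ae_restrict_iff' measurableSet_Ioc).2 (Filter.Eventually.of_forall fun t ht => ?_)
        simp only [Pi.zero_apply]
        exact mul_nonneg (sq_nonneg _) (hPpos t (Ioc_subset_Icc_self ht)).le
    have hae2 : ∀ᵐ t ∂(volume.restrict (Ioc (0:ℝ) T)), Y t ^ 2 * P t = 0 := by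
      filter_upwards [hae] with t h using h
    rw [ae_restrict_iff' measurableSet_Ioc] at hae2 ⊢
    filter_upwards [hae2] with t h1 ht
    have h2 := h1 ht
    have h3 := hPpos t (Ioc_subset_Icc_self ht)
    have : Y t ^ 2 = 0 := by
      rcases mul_eq_zero.1 h2 with h | h
      · exact h
      · exact absurd h (ne_of_gt h3)
    exact pow_eq_zero_iff (two_ne_zero) |>.1 this
  -- Y 0 = 0 by continuity
  have hY00 : Y 0 = 0 := by
    have hnull : volume ({t | Y t ≠ 0} ∩ Ioc (0:ℝ) T) = 0 := by
      have := ae_iff.1 hYae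
      rwa [Measure.restrict_apply' measurableSet_Ioc] at this
    have hseq : ∀ n : ℕ, ∃ t : ℝ, (0 < t ∧ t ≤ min T (1/(n+1))) ∧ Y t = 0 := by
      intro n
      by_contra hno
      push_neg at hno
      have hmpos : 0 < min T (1/((n:ℝ)+1)) := lt_min hT (by positivity)
      have hsub : Ioc 0 (min T (1/((n:ℝ)+1))) ⊆ {t | Y t ≠ 0} ∩ Ioc (0:ℝ) T := by
        intro t ht
        refine ⟨hno t ⟨ht.1, ht.2⟩, ht.1, ht.2.trans (min_le_left _ _)⟩
      have := measure_mono_null hsub hnull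
      rw [Real.volume_Ioc] at this
      simp only [sub_zero] at this
      exact absurd this (by
        have := ENNReal.ofReal_pos.2 hmpos
        exact ne_of_gt this)
    choose t ht hYt using hseq
    have htend : Filter.Tendsto t Filter.atTop (nhds 0) := by
      apply squeeze_zero (fun n => (ht n).1.le)
        (fun n => (ht n).2.trans (min_le_right _ _))
      exact tendsto_one_div_add_atTop_nhds_zero_nat
    have hmem : ∀ n, t n ∈ Icc (0:ℝ) T := fun n =>
      ⟨(ht n).1.le, (ht n).2.trans (min_le_left _ _)⟩
    have hcw : ContinuousWithinAt Y (Icc 0 T) 0 := hYc 0 ⟨le_rfl, hT.le⟩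
    have htend2 : Filter.Tendsto (fun n => Y (t n)) Filter.atTop (nhds (Y 0)) := by
      apply hcw.tendsto.comp
      apply tendsto_nhdsWithin_of_tendsto_nhds_of_eventually_within _ htend
      exact Filter.Eventually.of_forall hmem
    have htend3 : Filter.Tendsto (fun n => Y (t n)) Filter.atTop (nhds 0) := by
      simp only [hYt]
      exact tendsto_const_nhds
    exact tendsto_nhds_unique htend2 htend3
  -- conclusions
  have hJ0 : J0 = 0 := by
    rw [hY00, zero_add] at hY0
    exact (mul_eq_zero.1 hY0.symm).resolve_left (ne_of_gt hlam0m)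
  have hqint0 : (∫ u in (0:ℝ)..T, q u) = 0 := by
    rw [intervalIntegral.integral_of_le hT.le]
    rw [setIntegral_congr_ae measurableSet_Ioc
      (show ∀ᵐ x ∂volume, x ∈ Ioc (0:ℝ) T → q x = (fun _ => (0:ℝ)) x by
        rw [← ae_restrict_iff' measurableSet_Ioc]; exact hq0)]
    simp
  have hJT : JT = 0 := by
    rw [hJ0, hqint0, zero_add, zero_add] at hconstraint
    exact hconstraint
  refine ⟨hJ0, hJT, ?_⟩
  rw [show volume.restrict (Icc (0:ℝ) T) = volume.restrict (Ioc (0:ℝ) T) from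
    (Measure.restrict_congr_set Ioc_ae_eq_Icc).symm]
  exact hq0
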